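/- Let X, Y ∈ SL(2,ℝ) with |tr(X)| > 2 and |tr(Y)| > 2, and suppose their axes intersect and are distinct: there exists P ∈ ℍ minimizing both displacement functions (dist(P, X·P) ≤ dist(w, X·w) and dist(P, Y·P) ≤ dist(w, Y·w) for all w ∈ ℍ), and the set of points minimizing the displacement of X is not equal to the set of points minimizing the displacement of Y. Then the composition X·Y is hyperbolic: |tr(X·Y)| > 2. -/

import Mathlib

open UpperHalfPlane Matrix Complex
open scoped MatrixGroups

/-- The "axis equation" of a Möbius transformation: a point `z` lies on the axis of
`(a b; c d)` iff `Sfun a b c d z = 0`. -/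
noncomputable def Sfun (a b c d : ℝ) (z : ℍ) : ℝ :=
  c*(z.re^2+z.im^2)+(d-a)*z.re-b

lemma key1 (a d e h α β : ℝ) (h1 : a*d = 1+α^2) (h2 : e*h = 1+β^2)
    (hm : α*(h-e) - β*(d-a) ≠ 0) (hx : 0 < a*e) : a*e+d*h+2*α*β > 2 := by
  by_contra hT
  push_neg at hT
  set x := a*e with hxdef
  set y := d*h with hydef
  have hxy : x*y = (1+α^2)*(1+β^2) := by rw [hxdef, hydef]; nlinarith [h1, h2]
  have hy : 0 < y := by nlinarith [hxy, hx]
  have hsum : 0 < x + y := by linarith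
  have hsq : (x+y)^2 ≥ 4*((1+α^2)*(1+β^2)) := by nlinarith [sq_nonneg (x-y)]
  have hle : x + y ≤ 2 - 2*(α*β) := by linarith
  have hsq2 : (x+y)^2 ≤ (2-2*(α*β))^2 := by nlinarith
  have hab : β = -α := by nlinarith [sq_nonneg (α+β)]
  subst hab
  have hxeq : x = 1+α^2 ∧ y = 1+α^2 := by constructor <;> nlinarith [sq_nonneg (x-y)]
  have ha0 : a ≠ 0 := by intro h0; rw [h0] at h1; simp at h1; nlinarith [sq_nonneg α]
  have hd0 : d ≠ 0 := by intro h0; rw [h0] at h1; simp at h1; nlinarith [sq_nonneg α]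
  have hed : e = d := by
    have : a*(e-d) = 0 := by rw [mul_sub]; rw [hxdef] at hxeq; linarith [hxeq.1, h1]
    rcases mul_eq_zero.mp this with h' | h'
    · exact absurd h' ha0
    · linarith
  have hha : h = a := by
    have : d*(h-a) = 0 := by rw [mul_sub]; rw [hydef] at hxeq; nlinarith [hxeq.2, h1]
    rcases mul_eq_zero.mp this with h' | h'
    · exact absurd h' hd0
    · linarith
  apply hm
  rw [hed, hha]; ring

lemma key (a d e h α β : ℝ) (h1 : a*d = 1+α^2) (h2 : e*h = 1+β^2)
    (hm : α*(h-e) - β*(d-a) ≠ 0) : (a*e+d*h+2*α*β)^2 > 4 := by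
  have hxy : (a*e)*(d*h) = (1+α^2)*(1+β^2) := by nlinarith [h1, h2]
  have hx0 : a*e ≠ 0 := by
    intro h0
    rw [h0, zero_mul] at hxy
    nlinarith [sq_nonneg α, sq_nonneg β, sq_nonneg (α*β)]
  rcases hx0.lt_or_gt with hx | hx
  · have h2' : (-e)*(-h) = 1+(-β)^2 := by ring_nf; linarith [h2]
    have hm' : α*((-h)-(-e)) - (-β)*(d-a) ≠ 0 := by
      intro h0; apply hm; linarith [h0]
    have := key1 a d (-e) (-h) α (-β) h1 h2' hm' (by nlinarith)
    nlinarith [this]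
  · have := key1 a d e h α β h1 h2 hm hx
    nlinarith [this]

lemma denom_ne (c d : ℝ) (hcd : ¬(c = 0 ∧ d = 0)) (z : ℍ) : (c:ℂ)*z + d ≠ 0 := by
  intro H
  have him : c * (z:ℂ).im = 0 := by
    have := congrArg Complex.im H
    simpa using this
  have hc : c = 0 := by
    rcases mul_eq_zero.mp him with h | h
    · exact h
    · exact absurd h (ne_of_gt z.2)
  rw [hc] at H
  simp at H
  exact hcd ⟨hc, H⟩

lemma cosh_formula (a b c d : ℝ) (hdet : a*d - b*c = 1) (z w : ℍ)
    (hw : (w:ℂ) = ((a:ℂ)*z+b)/((c:ℂ)*z+d)) :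
    Real.cosh (dist z w) =
      1 + Complex.normSq ((c:ℂ)*(z:ℂ)^2 + ((d:ℂ)-(a:ℂ))*(z:ℂ) - (b:ℂ)) / (2 * z.im^2) := by
  have hcd : ¬(c = 0 ∧ d = 0) := by rintro ⟨rfl, rfl⟩; simp at hdet
  have hD : (c:ℂ)*z + d ≠ 0 := denom_ne c d hcd z
  have hnsq : Complex.normSq ((c:ℂ)*z + d) ≠ 0 := (Complex.normSq_pos.mpr hD).ne'
  have him : w.im = z.im / Complex.normSq ((c:ℂ)*z + d) := by
    rw [← UpperHalfPlane.coe_im, hw, Complex.div_im]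
    rw [div_sub_div_same]
    congr 1
    simp [Complex.normSq_apply, Complex.add_re, Complex.add_im, Complex.mul_re, Complex.mul_im,
      UpperHalfPlane.coe_im, UpperHalfPlane.coe_re]
    linear_combination z.im * hdet
  have hsub : (z:ℂ) - w = ((c:ℂ)*(z:ℂ)^2 + ((d:ℂ)-(a:ℂ))*(z:ℂ) - (b:ℂ)) / ((c:ℂ)*z + d) := by
    rw [hw]
    rw [eq_div_iff hD, sub_mul, div_mul_cancel₀ _ hD]
    ring
  rw [UpperHalfPlane.cosh_dist, Complex.dist_eq, Complex.sq_norm, hsub, Complex.normSq_div, him]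
  have hzim : z.im ≠ 0 := (ne_of_gt z.2)
  field_simp

lemma normSq_Q (a b c d : ℝ) (hdet : a*d-b*c=1) (z : ℍ) :
    Complex.normSq ((c:ℂ)*(z:ℂ)^2+((d:ℂ)-(a:ℂ))*(z:ℂ)-(b:ℂ)) =
      ((a+d)^2-4)*z.im^2 + (Sfun a b c d z)^2 := by
  simp only [Sfun, Complex.normSq_apply, Complex.sub_re, Complex.sub_im, Complex.add_re,
    Complex.add_im, Complex.mul_re, Complex.mul_im, Complex.ofReal_re, Complex.ofReal_im,
    pow_two, ← UpperHalfPlane.coe_re, ← UpperHalfPlane.coe_im]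
  linear_combination (-4*(z:ℂ).im^2) * hdet

lemma axis_exists (a b c d : ℝ) (hdet : a*d-b*c=1) (htr : (a+d)^2 > 4) :
    ∃ w : ℍ, Sfun a b c d w = 0 := by
  by_cases hc : c = 0
  · have hda : d - a ≠ 0 := by
      intro h0
      have : d = a := by linarith
      rw [hc] at hdet
      nlinarith [hdet, htr]
    refine ⟨⟨⟨b/(d-a), 1⟩, by norm_num⟩, ?_⟩
    show c*((b/(d-a))^2+1^2)+(d-a)*(b/(d-a))-b = 0
    rw [hc]
    field_simp
    ring
  · have hpos : (0:ℝ) < (a+d)^2 - 4 := by linarith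
    set y := Real.sqrt ((a+d)^2-4) / (2*|c|) with hy
    have hcabs : (0:ℝ) < |c| := abs_pos.mpr hc
    have hypos : 0 < y := by
      apply div_pos (Real.sqrt_pos.mpr hpos)
      linarith
    have hysq : y^2 = ((a+d)^2-4)/(4*c^2) := by
      rw [hy, div_pow, Real.sq_sqrt (le_of_lt hpos)]
      rw [mul_pow, _root_.sq_abs]
      norm_num
    refine ⟨⟨⟨(a-d)/(2*c), y⟩, hypos⟩, ?_⟩
    show c*(((a-d)/(2*c))^2+y^2)+(d-a)*((a-d)/(2*c))-b = 0
    rw [hysq]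
    field_simp
    linear_combination 16 * hdet

lemma smul_coe (g : SL(2,ℝ)) (z : ℍ) :
    ((g • z : ℍ) : ℂ) = (((g 0 0 : ℝ):ℂ) * z + ((g 0 1 : ℝ):ℂ)) /
      (((g 1 0 : ℝ):ℂ) * z + ((g 1 1 : ℝ):ℂ)) := by
  rw [UpperHalfPlane.specialLinearGroup_apply]
  simp [UpperHalfPlane.coe_mk]

lemma sl_det (g : SL(2,ℝ)) : g 0 0 * g 1 1 - g 0 1 * g 1 0 = 1 := by
  have := g.2
  rwa [Matrix.det_fin_two] at this

lemma disp_eq (g : SL(2,ℝ)) (z : ℍ) :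
    Real.cosh (dist z (g • z)) =
      1 + (((g 0 0 + g 1 1)^2-4)*z.im^2 +
        (Sfun (g 0 0) (g 0 1) (g 1 0) (g 1 1) z)^2) / (2*z.im^2) := by
  rw [cosh_formula (g 0 0) (g 0 1) (g 1 0) (g 1 1) (sl_det g) z _ (smul_coe g z),
    normSq_Q (g 0 0) (g 0 1) (g 1 0) (g 1 1) (sl_det g)]

lemma min_iff (g : SL(2,ℝ)) (htr : (g 0 0 + g 1 1)^2 > 4) (z : ℍ) :
    (∀ w : ℍ, dist z (g • z) ≤ dist w (g • w)) ↔
      Sfun (g 0 0) (g 0 1) (g 1 0) (g 1 1) z = 0 := by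
  obtain ⟨w₀, hw₀⟩ := axis_exists (g 0 0) (g 0 1) (g 1 0) (g 1 1) (sl_det g) htr
  have hz : 0 < z.im := z.2
  have hw : 0 < w₀.im := w₀.2
  constructor
  · intro H
    have h2 : Real.cosh (dist z (g • z)) ≤ Real.cosh (dist w₀ (g • w₀)) := by
      apply Real.cosh_le_cosh.mpr
      rw [_root_.abs_of_nonneg dist_nonneg, _root_.abs_of_nonneg dist_nonneg]
      exact H w₀
    rw [disp_eq, disp_eq, hw₀] at h2
    have h3 : (((g 0 0 + g 1 1)^2-4)*z.im^2 +
        (Sfun (g 0 0) (g 0 1) (g 1 0) (g 1 1) z)^2) / (2*z.im^2) ≤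
        (((g 0 0 + g 1 1)^2-4)*w₀.im^2 + 0^2) / (2*w₀.im^2) := by linarith
    rw [div_le_div_iff₀ (by positivity) (by positivity)] at h3
    have h4 : (Sfun (g 0 0) (g 0 1) (g 1 0) (g 1 1) z)^2 ≤ 0 := by
      nlinarith [h3, pow_pos hw 2, pow_pos hz 2]
    exact pow_eq_zero_iff two_ne_zero |>.mp (le_antisymm h4 (sq_nonneg _))
  · intro hS w
    have hwim : 0 < w.im := w.2
    have h1 : Real.cosh (dist z (g • z)) ≤ Real.cosh (dist w (g • w)) := by
      rw [disp_eq, disp_eq, hS]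
      have h3 : (((g 0 0 + g 1 1)^2-4)*z.im^2 + 0^2) / (2*z.im^2) ≤
          (((g 0 0 + g 1 1)^2-4)*w.im^2 +
            (Sfun (g 0 0) (g 0 1) (g 1 0) (g 1 1) w)^2) / (2*w.im^2) := by
        rw [div_le_div_iff₀ (by positivity) (by positivity)]
        nlinarith [mul_nonneg (sq_nonneg (Sfun (g 0 0) (g 0 1) (g 1 0) (g 1 1) w))
          (le_of_lt (pow_pos hz 2))]
      linarith
    have h2 := Real.cosh_le_cosh.mp h1
    rwa [_root_.abs_of_nonneg dist_nonneg, _root_.abs_of_nonneg dist_nonneg] at h2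

set_option maxHeartbeats 2000000 in
/-- If two hyperbolic elements of SL(2,ℝ) have distinct axes that intersect,
then their composition is hyperbolic. -/
theorem product_hyperbolic_of_crossing_axes (X Y : SL(2, ℝ))
    (hX : |Matrix.trace (X : Matrix (Fin 2) (Fin 2) ℝ)| > 2)
    (hY : |Matrix.trace (Y : Matrix (Fin 2) (Fin 2) ℝ)| > 2)
    (P : ℍ)
    (hPX : ∀ w : ℍ, dist P (X • P) ≤ dist w (X • w))
    (hPY : ∀ w : ℍ, dist P (Y • P) ≤ dist w (Y • w))
    (haxes : {z : ℍ | ∀ w : ℍ, dist z (X • z) ≤ dist w (X • w)} ≠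
             {z : ℍ | ∀ w : ℍ, dist z (Y • z) ≤ dist w (Y • w)}) :
    |Matrix.trace ((X * Y : SL(2, ℝ)) : Matrix (Fin 2) (Fin 2) ℝ)| > 2 := by
  set a := X 0 0 with ha
  set b := X 0 1 with hb
  set c := X 1 0 with hc
  set d := X 1 1 with hd
  set e := Y 0 0 with he
  set f := Y 0 1 with hf
  set gc := Y 1 0 with hgc
  set hh := Y 1 1 with hhh
  have hdetX : a*d - b*c = 1 := sl_det X
  have hdetY : e*hh - f*gc = 1 := sl_det Y
  rw [Matrix.trace_fin_two] at hX hY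
  have htrX : (a + d)^2 > 4 := by nlinarith [_root_.sq_abs (a+d), abs_nonneg (a+d)]
  have htrY : (e + hh)^2 > 4 := by nlinarith [_root_.sq_abs (e+hh), abs_nonneg (e+hh)]
  have hC1 : Sfun a b c d P = 0 := (min_iff X htrX P).mp hPX
  have hC2 : Sfun e f gc hh P = 0 := (min_iff Y htrY P).mp hPY
  simp only [Sfun] at hC1 hC2
  have hsets : {z : ℍ | Sfun a b c d z = 0} ≠ {z : ℍ | Sfun e f gc hh z = 0} := by
    intro hEq
    apply haxes
    ext z
    rw [Set.mem_setOf_eq, Set.mem_setOf_eq, min_iff X htrX z, min_iff Y htrY z]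
    exact Set.ext_iff.mp hEq z
  -- nondegeneracy of the axis equations
  have hvX : ¬(c = 0 ∧ d - a = 0) := by
    rintro ⟨hc0, hda0⟩
    simp only [Sfun, hc0, hda0] at hC1
    have hb0 : b = 0 := by linarith
    rw [hb0] at hdetX
    nlinarith [hdetX, htrX]
  have hvY : ¬(gc = 0 ∧ hh - e = 0) := by
    rintro ⟨hc0, hda0⟩
    simp only [Sfun, hc0, hda0] at hC2
    have hf0 : f = 0 := by linarith
    rw [hf0] at hdetY
    nlinarith [hdetY, htrY]
  -- cross-identities between the two axis equations
  have idc : ∀ z : ℍ, c * Sfun e f gc hh z - gc * Sfun a b c d z =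
      (c*(hh-e) - gc*(d-a)) * (z.re - P.re) := by
    intro z
    simp only [Sfun]
    linear_combination c*hC2 - gc*hC1
  have idd : ∀ z : ℍ, (d-a) * Sfun e f gc hh z - (hh-e) * Sfun a b c d z =
      -(c*(hh-e) - gc*(d-a)) * (z.re^2+z.im^2 - (P.re^2+P.im^2)) := by
    intro z
    simp only [Sfun]
    linear_combination (d-a)*hC2 - (hh-e)*hC1
  -- the crossing condition: the axes are distinct, hence m1 ≠ 0
  have hm1 : c*(hh-e) - gc*(d-a) ≠ 0 := by
    intro hm0
    apply hsets
    ext z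
    simp only [Set.mem_setOf_eq]
    have i1 := idc z
    have i2 := idd z
    rw [hm0] at i1 i2
    simp only [zero_mul, neg_zero] at i1 i2
    constructor
    · intro hz
      rw [hz, mul_zero, sub_zero] at i1 i2
      rcases not_and_or.mp hvX with h' | h'
      · rcases mul_eq_zero.mp i1 with h'' | h''
        · exact absurd h'' h'
        · exact h''
      · rcases mul_eq_zero.mp i2 with h'' | h''
        · exact absurd h'' h'
        · exact h''
    · intro hz
      rw [hz, mul_zero, zero_sub, neg_eq_zero] at i1 i2
      rcases not_and_or.mp hvY with h' | h'
      · rcases mul_eq_zero.mp i1 with h'' | h''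
        · exact absurd h'' h'
        · exact h''
      · rcases mul_eq_zero.mp i2 with h'' | h''
        · exact absurd h'' h'
        · exact h''
  -- now the trace computation
  set p := P.re with hp
  set q := P.im with hq
  have hq0 : 0 < q := P.2
  have h1 : (a - c*p)*(d + c*p) = 1 + (c*q)^2 := by
    linear_combination hdetX - c*hC1
  have h2 : (e - gc*p)*(hh + gc*p) = 1 + (gc*q)^2 := by
    linear_combination hdetY - gc*hC2
  have hm' : (c*q)*((hh + gc*p) - (e - gc*p)) - (gc*q)*((d + c*p) - (a - c*p)) ≠ 0 := by
    intro h0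
    apply hm1
    have hqq : q * (c*(hh-e) - gc*(d-a)) = 0 := by linear_combination h0
    rcases mul_eq_zero.mp hqq with h' | h'
    · exact absurd h' (ne_of_gt hq0)
    · exact h'
  have hkey := key (a - c*p) (d + c*p) (e - gc*p) (hh + gc*p) (c*q) (gc*q) h1 h2 hm'
  have htrace : Matrix.trace ((X * Y : SL(2, ℝ)) : Matrix (Fin 2) (Fin 2) ℝ) =
      (a - c*p)*(e - gc*p) + (d + c*p)*(hh + gc*p) + 2*(c*q)*(gc*q) := by
    have hcoe : ((X * Y : SL(2, ℝ)) : Matrix (Fin 2) (Fin 2) ℝ) =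
        (X : Matrix (Fin 2) (Fin 2) ℝ) * (Y : Matrix (Fin 2) (Fin 2) ℝ) := by
      simp
    rw [hcoe, Matrix.trace_fin_two]
    simp only [Matrix.mul_apply, Fin.sum_univ_two]
    linear_combination (-gc)*hC1 + (-c)*hC2
  rw [htrace]
  set T := (a - c*p)*(e - gc*p) + (d + c*p)*(hh + gc*p) + 2*(c*q)*(gc*q)
  nlinarith [abs_nonneg T, _root_.sq_abs T, hkey]
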